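/- Let ω be a radial weight on the unit disc with reproducing kernels B^ω_z of A²_ω. Then for all z, ζ in the unit disc, 2(1 - \overline{z}ζ) B^ω_z(ζ) = 1/ω₁ + Σ_{n=1}^∞ ((ω_{(1,2)})_{2n-1} / (ω_{2n+1} ω_{2n-1})) (\overline{z}ζ)^n, where (ω_{(1,2)})_x = ∫_0^1 r^x (1 - r²) ω(r) dr and ω_x = ∫_0^1 r^x ω(r) dr. -/

import Mathlib

open MeasureTheory Complex
open scoped ComplexConjugate

/-- The x-th moment of a radial weight. -/
noncomputable def moment (ω : ℝ → ℝ) (x : ℕ) : ℝ := ∫ r in (0:ℝ)..1, r ^ x * ω r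

/-- The modified moment (ω_{(1,2)})_x = ∫_0^1 r^x (1-r²) ω(r) dr. -/
noncomputable def momentMod (ω : ℝ → ℝ) (x : ℕ) : ℝ :=
  ∫ r in (0:ℝ)..1, r ^ x * (1 - r ^ 2) * ω r

/-- The Bergman reproducing kernel of A²_ω for a radial weight ω. -/
noncomputable def bergmanKernel (ω : ℝ → ℝ) (z ζ : ℂ) : ℂ :=
  ∑' n : ℕ, (conj z * ζ) ^ n / ((2 * moment ω (2 * n + 1) : ℝ) : ℂ)

lemma momint (ω : ℝ → ℝ) (hω_int : IntervalIntegrable ω volume 0 1) (x : ℕ) :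
    IntervalIntegrable (fun r => r ^ x * ω r) volume 0 1 :=
  hω_int.continuousOn_mul (Continuous.continuousOn (by continuity))

lemma moment_ge (ω : ℝ → ℝ)
    (hω_nonneg : ∀ r ∈ Set.Ico (0:ℝ) 1, 0 ≤ ω r)
    (hω_int : IntervalIntegrable ω volume 0 1)
    (x : ℕ) (ρ : ℝ) (hρ0 : 0 ≤ ρ) (hρ1 : ρ < 1) :
    ρ ^ x * ∫ s in ρ..1, ω s ≤ moment ω x := by
  have hsub : Set.uIcc ρ 1 ⊆ Set.uIcc (0:ℝ) 1 :=
    Set.uIcc_subset_uIcc (by simp only [Set.uIcc_of_le (zero_le_one' ℝ)]; exact ⟨hρ0, hρ1.le⟩) (by simp)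
  have hsub0 : Set.uIcc 0 ρ ⊆ Set.uIcc (0:ℝ) 1 :=
    Set.uIcc_subset_uIcc (by simp) (by simp only [Set.uIcc_of_le (zero_le_one' ℝ)]; exact ⟨hρ0, hρ1.le⟩)
  have hint := momint ω hω_int x
  have h1 : IntervalIntegrable (fun r => r ^ x * ω r) volume 0 ρ := hint.mono_set hsub0
  have h2 : IntervalIntegrable (fun r => r ^ x * ω r) volume ρ 1 := hint.mono_set hsub
  have hconst : IntervalIntegrable (fun r => ρ ^ x * ω r) volume ρ 1 :=
    (hω_int.mono_set hsub).const_mul _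
  have hsplit : moment ω x = (∫ r in (0:ℝ)..ρ, r ^ x * ω r) + ∫ r in ρ..1, r ^ x * ω r := by
    rw [moment, ← intervalIntegral.integral_add_adjacent_intervals h1 h2]
  have hpos0 : 0 ≤ ∫ r in (0:ℝ)..ρ, r ^ x * ω r := by
    apply intervalIntegral.integral_nonneg hρ0
    intro u hu
    exact mul_nonneg (pow_nonneg hu.1 _) (hω_nonneg u ⟨hu.1, lt_of_le_of_lt hu.2 hρ1⟩)
  have hae : ∀ᵐ r ∂(volume.restrict (Set.Icc ρ 1)), ρ ^ x * ω r ≤ r ^ x * ω r := by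
    have hne : ∀ᵐ r ∂(volume.restrict (Set.Icc ρ 1)), r ≠ 1 := by
      apply ae_restrict_of_ae
      rw [ae_iff]
      simpa using (measure_singleton (1:ℝ) : (volume : Measure ℝ) {1} = 0)
    filter_upwards [hne, ae_restrict_mem measurableSet_Icc] with r hr1 hrmem
    have hr0 : 0 ≤ r := le_trans hρ0 hrmem.1
    have hrlt : r < 1 := lt_of_le_of_ne hrmem.2 hr1
    exact mul_le_mul_of_nonneg_right (pow_le_pow_left₀ hρ0 hrmem.1 _)
      (hω_nonneg r ⟨hr0, hrlt⟩)
  have hmono : (∫ r in ρ..1, ρ ^ x * ω r) ≤ ∫ r in ρ..1, r ^ x * ω r :=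
    intervalIntegral.integral_mono_ae_restrict hρ1.le hconst h2 hae
  rw [hsplit]
  have : ρ ^ x * ∫ s in ρ..1, ω s = ∫ r in ρ..1, ρ ^ x * ω r := by
    rw [← intervalIntegral.integral_const_mul]
  linarith

lemma moment_pos (ω : ℝ → ℝ)
    (hω_nonneg : ∀ r ∈ Set.Ico (0:ℝ) 1, 0 ≤ ω r)
    (hω_int : IntervalIntegrable ω volume 0 1)
    (hω_pos : ∀ r ∈ Set.Ico (0:ℝ) 1, 0 < ∫ s in r..1, ω s) (x : ℕ) :
    0 < moment ω x := by
  have h := moment_ge ω hω_nonneg hω_int x (1/2) (by norm_num) (by norm_num)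
  have hc := hω_pos (1/2) (by norm_num)
  have : (0:ℝ) < (1/2:ℝ) ^ x * ∫ s in (1/2:ℝ)..1, ω s := by positivity
  linarith

lemma momentMod_eq (ω : ℝ → ℝ) (hω_int : IntervalIntegrable ω volume 0 1) (x : ℕ) :
    momentMod ω x = moment ω x - moment ω (x + 2) := by
  rw [momentMod, moment, moment,
    ← intervalIntegral.integral_sub (momint ω hω_int x) (momint ω hω_int (x + 2))]
  congr 1
  ext r
  ring

theorem kernel_series_identity (ω : ℝ → ℝ)
    (hω_nonneg : ∀ r ∈ Set.Ico (0:ℝ) 1, 0 ≤ ω r)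
    (hω_int : IntervalIntegrable ω volume 0 1)
    (hω_pos : ∀ r ∈ Set.Ico (0:ℝ) 1, 0 < ∫ s in r..1, ω s)
    (z ζ : ℂ) (hz : z ∈ Metric.ball (0:ℂ) 1) (hζ : ζ ∈ Metric.ball (0:ℂ) 1) :
    2 * (1 - conj z * ζ) * bergmanKernel ω z ζ =
      ((1 / moment ω 1 : ℝ) : ℂ) +
        ∑' n : ℕ,
          ((momentMod ω (2 * (n + 1) - 1) /
              (moment ω (2 * (n + 1) + 1) * moment ω (2 * (n + 1) - 1)) : ℝ) : ℂ) *
            (conj z * ζ) ^ (n + 1) := by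
  have hm_pos : ∀ k, 0 < moment ω k := moment_pos ω hω_nonneg hω_int hω_pos
  set w : ℂ := conj z * ζ with hw
  have hznorm : ‖z‖ < 1 := by simpa using mem_ball_zero_iff.mp hz
  have hζnorm : ‖ζ‖ < 1 := by simpa using mem_ball_zero_iff.mp hζ
  have ht : ‖w‖ < 1 := by
    rw [hw, norm_mul, RCLike.norm_conj]
    calc ‖z‖ * ‖ζ‖ ≤ ‖z‖ * 1 := by
          exact mul_le_mul_of_nonneg_left hζnorm.le (norm_nonneg _)
      _ < 1 := by simpa using hznorm
  have ht0 : (0:ℝ) ≤ ‖w‖ := norm_nonneg _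
  obtain ⟨ρ, c, hρ0, hρ1, htρ, hc, hmρ⟩ :
      ∃ ρ c : ℝ, 0 < ρ ∧ ρ < 1 ∧ ‖w‖ < ρ ^ 2 ∧ 0 < c ∧ ∀ k, ρ ^ k * c ≤ moment ω k := by
    refine ⟨(‖w‖ + 1) / 2, ∫ s in ((‖w‖ + 1) / 2)..1, ω s, by positivity, by linarith,
      by nlinarith [sq_nonneg (‖w‖ - 1)],
      hω_pos _ ⟨by positivity, by linarith⟩,
      fun k => moment_ge ω hω_nonneg hω_int k _ (by positivity) (by linarith)⟩
  -- summability
  set f : ℕ → ℂ := fun n => w ^ n / ((moment ω (2 * n + 1) : ℝ) : ℂ) with hfdef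
  have hf : Summable f := by
    apply Summable.of_norm
    have hbound : ∀ n, ‖f n‖ ≤ (1 / (ρ * c)) * (‖w‖ / ρ ^ 2) ^ n := by
      intro n
      rw [hfdef]
      simp only [norm_div, norm_pow, Complex.norm_real, Real.norm_eq_abs,
        abs_of_pos (hm_pos (2 * n + 1))]
      have h1 : ρ ^ (2 * n + 1) * c ≤ moment ω (2 * n + 1) := hmρ _
      have h2 : 0 < ρ ^ (2 * n + 1) * c := by positivity
      calc ‖w‖ ^ n / moment ω (2 * n + 1) ≤ ‖w‖ ^ n / (ρ ^ (2 * n + 1) * c) := by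
            apply div_le_div_of_nonneg_left (by positivity) h2 h1
        _ = (1 / (ρ * c)) * (‖w‖ / ρ ^ 2) ^ n := by
            rw [div_pow, ← pow_mul]
            rw [show 2 * n + 1 = n * 2 + 1 by ring]
            field_simp [hρ0.ne', hc.ne']
            ring
    apply Summable.of_nonneg_of_le (fun n => norm_nonneg _) hbound
    apply Summable.mul_left
    apply summable_geometric_of_lt_one (by positivity)
    rw [div_lt_one (by positivity)]
    exact htρ
  have hf1 : Summable (fun n => f (n + 1)) := (summable_nat_add_iff 1).mpr hf
  have hf2 : Summable (fun n => w * f n) := hf.mul_left w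
  -- 2 * kernel = sum of f
  have h2K : (2 : ℂ) * bergmanKernel ω z ζ = ∑' n, f n := by
    rw [bergmanKernel, ← tsum_mul_left]
    congr 1
    ext n
    rw [hfdef]
    have : ((moment ω (2 * n + 1) : ℝ) : ℂ) ≠ 0 :=
      Complex.ofReal_ne_zero.mpr (hm_pos (2 * n + 1)).ne'
    push_cast
    rw [← hw]
    field_simp
  have aux : ∀ (a b : ℝ), a ≠ 0 → b ≠ 0 → ∀ n : ℕ,
      w ^ (n + 1) / ((b : ℝ) : ℂ) - w * (w ^ n / ((a : ℝ) : ℂ)) =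
        (((a - b) / (b * a) : ℝ) : ℂ) * w ^ (n + 1) := by
    intro a b ha hb n
    have ha' : ((a : ℝ) : ℂ) ≠ 0 := Complex.ofReal_ne_zero.mpr ha
    have hb' : ((b : ℝ) : ℂ) ≠ 0 := Complex.ofReal_ne_zero.mpr hb
    push_cast
    field_simp
    ring
  have key : ∀ n : ℕ, f (n + 1) - w * f n =
      ((momentMod ω (2 * (n + 1) - 1) /
        (moment ω (2 * (n + 1) + 1) * moment ω (2 * (n + 1) - 1)) : ℝ) : ℂ) * w ^ (n + 1) := by
    intro n
    have e1 : 2 * (n + 1) - 1 = 2 * n + 1 := by omega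
    have e2 : 2 * (n + 1) + 1 = 2 * n + 3 := by omega
    rw [e1, e2, hfdef]
    have hMM : momentMod ω (2 * n + 1) = moment ω (2 * n + 1) - moment ω (2 * n + 3) := by
      have := momentMod_eq ω hω_int (2 * n + 1)
      simpa [show 2 * n + 1 + 2 = 2 * n + 3 by omega] using this
    rw [hMM]
    have e3 : 2 * (n + 1) + 1 = 2 * n + 3 := e2
    simpa [e3] using aux (moment ω (2 * n + 1)) (moment ω (2 * n + 3))
      (hm_pos (2 * n + 1)).ne' (hm_pos (2 * n + 3)).ne' n
  have hS : ∑' n, f n = f 0 + ∑' n, f (n + 1) := Summable.tsum_eq_zero_add hf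
  have hws : w * ∑' n, f n = ∑' n, w * f n := (tsum_mul_left).symm
  calc 2 * (1 - w) * bergmanKernel ω z ζ
      = (1 - w) * (2 * bergmanKernel ω z ζ) := by ring
    _ = (1 - w) * ∑' n, f n := by rw [h2K]
    _ = (∑' n, f n) - w * ∑' n, f n := by ring
    _ = (f 0 + ∑' n, f (n + 1)) - ∑' n, w * f n := by rw [hws, hS]
    _ = f 0 + ((∑' n, f (n + 1)) - ∑' n, w * f n) := by ring
    _ = f 0 + ∑' n, (f (n + 1) - w * f n) := by rw [Summable.tsum_sub hf1 hf2]
    _ = ((1 / moment ω 1 : ℝ) : ℂ) +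
        ∑' n : ℕ,
          ((momentMod ω (2 * (n + 1) - 1) /
              (moment ω (2 * (n + 1) + 1) * moment ω (2 * (n + 1) - 1)) : ℝ) : ℂ) *
            w ^ (n + 1) := by
        congr 1
        · rw [hfdef]
          norm_num
        · exact tsum_congr key
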